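/- Hockey-stick divergence under local depolarizing noise: let D_p be the depolarizing channel on a D-dimensional system with parameter 0 ≤ p ≤ 1 and consider its k-fold tensor power D_p^{⊗k} acting on k subsystems. Then for all density operators ρ, σ on the D^k-dimensional composite system and all γ ≥ 1, E_γ(D_p^{⊗k}(ρ) ‖ D_p^{⊗k}(σ)) ≤ max{0, (1−γ)·p^k/D^k + (1 − p^k)·E_γ(ρ‖σ)}, and consequently η_γ(D_p^{⊗k}) ≤ max{0, (1−γ)·p^k/D^k + (1 − p^k)}. -/

import Mathlib

open scoped BigOperators ComplexOrder
set_option linter.unusedSectionVars false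
set_option maxHeartbeats 1000000

/-- Trace of the positive part of a Hermitian matrix (0 if not Hermitian). -/
noncomputable def posPartTrace {n : Type*} [Fintype n] [DecidableEq n]
    (X : Matrix n n ℂ) : ℝ :=
  if h : X.IsHermitian then ∑ i, max (h.eigenvalues i) 0 else 0

/-- The quantum hockey-stick divergence `E_γ(ρ‖σ) = Tr[(ρ - γσ)₊]`. -/
noncomputable def hsDiv {n : Type*} [Fintype n] [DecidableEq n]
    (γ : ℝ) (ρ σ : Matrix n n ℂ) : ℝ :=
  posPartTrace (ρ - (γ : ℂ) • σ)

/-- A density operator: positive semidefinite with unit trace. -/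
def IsDensity {n : Type*} [Fintype n] [DecidableEq n] (ρ : Matrix n n ℂ) : Prop :=
  ρ.PosSemidef ∧ ρ.trace = 1

/-- Trace norm: the sum of the singular values. -/
noncomputable def traceNorm {n : Type*} [Fintype n] [DecidableEq n]
    (X : Matrix n n ℂ) : ℝ :=
  ∑ i, Real.sqrt ((Matrix.posSemidef_conjTranspose_mul_self X).isHermitian.eigenvalues i)

/-- Completely positive trace-preserving linear map. -/
def IsCPTP {n m : Type*} [Fintype n] [DecidableEq n] [Fintype m] [DecidableEq m]
    (Φ : Matrix n n ℂ →ₗ[ℂ] Matrix m m ℂ) : Prop :=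
  (∀ k : ℕ, ∀ X : Matrix (Fin k × n) (Fin k × n) ℂ, X.PosSemidef →
      (Matrix.of fun p q : Fin k × m =>
        Φ (Matrix.of fun i j => X (p.1, i) (q.1, j)) p.2 q.2).PosSemidef) ∧
  (∀ X, (Φ X).trace = X.trace)

/-- Contraction coefficient of a channel for the hockey-stick divergence. -/
noncomputable def contractionCoeff {n : Type*} [Fintype n] [DecidableEq n]
    (γ : ℝ) (Φ : Matrix n n ℂ →ₗ[ℂ] Matrix n n ℂ) : ℝ :=
  sSup {x : ℝ | ∃ ρ σ : Matrix n n ℂ, IsDensity ρ ∧ IsDensity σ ∧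
    0 < hsDiv γ ρ σ ∧ x = hsDiv γ (Φ ρ) (Φ σ) / hsDiv γ ρ σ}

/-- The depolarizing channel with parameter `p` acting on site `j` of a composite system
of `k` subsystems, each of dimension `D`:
`ρ ↦ (1-p) ρ + p (Tr_j ρ) ⊗_j (I/D)`. -/
noncomputable def depolSite (D k : ℕ) (p : ℝ) (j : Fin k) :
    Matrix (Fin k → Fin D) (Fin k → Fin D) ℂ →ₗ[ℂ]
      Matrix (Fin k → Fin D) (Fin k → Fin D) ℂ where
  toFun X := Matrix.of fun a b =>
    (1 - (p : ℂ)) * X a b +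
      ((p : ℂ) / D) * (if a j = b j then
        ∑ s : Fin D, X (Function.update a j s) (Function.update b j s) else 0)
  map_add' X Y := by
    ext a b
    by_cases h : a j = b j <;>
      simp [h, Matrix.add_apply, Finset.sum_add_distrib, mul_add] <;> ring
  map_smul' c X := by
    ext a b
    by_cases h : a j = b j <;>
      simp [h, Matrix.smul_apply, Finset.mul_sum, smul_eq_mul, mul_add] <;> ring

/-- The `k`-fold tensor power `D_p^{⊗k}` of the depolarizing channel, realized as the
composition of the single-site depolarizing channels on all `k` sites. -/
noncomputable def depolPow (D k : ℕ) (p : ℝ) :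
    Matrix (Fin k → Fin D) (Fin k → Fin D) ℂ →ₗ[ℂ]
      Matrix (Fin k → Fin D) (Fin k → Fin D) ℂ :=
  (List.finRange k).foldl (fun acc j => depolSite D k p j ∘ₗ acc) LinearMap.id

namespace HSAux

open Matrix

variable {n : Type*} [Fintype n] [DecidableEq n]

lemma smul_posSemidef {c : ℝ} (hc : 0 ≤ c) {X : Matrix n n ℂ} (hX : X.PosSemidef) :
    ((c : ℂ) • X).PosSemidef := by
  exact hX.smul (Complex.zero_le_real.2 hc)

lemma trace_re_nonneg {M : Matrix n n ℂ} (hM : M.PosSemidef) : 0 ≤ M.trace.re := by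
  have h : ∀ i, 0 ≤ (M i i).re := fun i => by
    exact (Complex.le_def.mp hM.diag_nonneg).1
  simpa [Matrix.trace, Matrix.diag, Complex.re_sum] using Finset.sum_nonneg fun i _ => h i

open scoped MatrixOrder in
lemma trace_mul_re_nonneg {P M : Matrix n n ℂ} (hP : P.PosSemidef) (hM : M.PosSemidef) :
    0 ≤ (P * M).trace.re := by
  have h1 : P * M = (CFC.sqrt P) * ((CFC.sqrt P) * M) := by
    rw [← mul_assoc, CFC.sqrt_mul_sqrt_self P hP.nonneg]
  have h2 : (P * M).trace = ((CFC.sqrt P) * M * (CFC.sqrt P)).trace := by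
    rw [h1, Matrix.trace_mul_comm, mul_assoc]
  rw [h2]
  have h3 : ((CFC.sqrt P) * M * (CFC.sqrt P)).PosSemidef := by
    have := hM.mul_mul_conjTranspose_same (CFC.sqrt P)
    rwa [(CFC.sqrt_nonneg P).posSemidef.1.eq] at this
  exact trace_re_nonneg h3


/-- conjugation by the eigenvector unitary -/
noncomputable def conjDiag {X : Matrix n n ℂ} (hX : X.IsHermitian) (d : n → ℝ) :
    Matrix n n ℂ :=
  (hX.eigenvectorUnitary : Matrix n n ℂ) * diagonal (fun i => (d i : ℂ)) *
    (star hX.eigenvectorUnitary : Matrix n n ℂ)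

lemma conjDiag_posSemidef {X : Matrix n n ℂ} (hX : X.IsHermitian) {d : n → ℝ}
    (hd : ∀ i, 0 ≤ d i) : (conjDiag hX d).PosSemidef := by
  have h1 : (diagonal (fun i => ((d i : ℂ)))).PosSemidef :=
    PosSemidef.diagonal fun i => by simpa using Complex.zero_le_real.2 (hd i)
  simpa [conjDiag, Matrix.star_eq_conjTranspose] using
    h1.mul_mul_conjTranspose_same (hX.eigenvectorUnitary : Matrix n n ℂ)

lemma conjDiag_trace {X : Matrix n n ℂ} (hX : X.IsHermitian) (d : n → ℝ) :
    (conjDiag hX d).trace = ∑ i, (d i : ℂ) := by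
  rw [conjDiag, Matrix.trace_mul_comm, ← mul_assoc]
  have : (star hX.eigenvectorUnitary : Matrix n n ℂ) *
      (hX.eigenvectorUnitary : Matrix n n ℂ) = 1 := by
    exact_mod_cast Unitary.coe_star_mul_self hX.eigenvectorUnitary
  rw [this, one_mul, Matrix.trace_diagonal]

lemma conjDiag_mul {X : Matrix n n ℂ} (hX : X.IsHermitian) (d e : n → ℝ) :
    conjDiag hX d * conjDiag hX e = conjDiag hX (d * e) := by
  have h1 : (star hX.eigenvectorUnitary : Matrix n n ℂ) *
      (hX.eigenvectorUnitary : Matrix n n ℂ) = 1 := by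
    exact_mod_cast Unitary.coe_star_mul_self hX.eigenvectorUnitary
  simp only [conjDiag, mul_assoc]
  rw [← mul_assoc (star hX.eigenvectorUnitary : Matrix n n ℂ)
    (hX.eigenvectorUnitary : Matrix n n ℂ), h1, one_mul,
    ← mul_assoc (diagonal _) (diagonal _), diagonal_mul_diagonal]
  have h3 : (fun i => ((d i : ℝ) : ℂ) * ((e i : ℝ) : ℂ)) =
      fun i => (((d * e) i : ℝ) : ℂ) := by
    funext i; simp only [Pi.mul_apply]; push_cast; ring
  rw [h3]

lemma conjDiag_sub {X : Matrix n n ℂ} (hX : X.IsHermitian) (d e : n → ℝ) :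
    conjDiag hX d - conjDiag hX e = conjDiag hX (d - e) := by
  have h2 : (fun i => (((d - e) i : ℝ) : ℂ)) =
      fun i => ((d i : ℝ) : ℂ) - ((e i : ℝ) : ℂ) := by
    funext i; simp
  simp only [conjDiag, h2, ← diagonal_sub, Matrix.sub_mul, Matrix.mul_sub]

lemma conjDiag_eigen {X : Matrix n n ℂ} (hX : X.IsHermitian) :
    conjDiag hX hX.eigenvalues = X := by
  rw [conjDiag]
  convert (hX.spectral_theorem).symm using 2
  rw [Unitary.conjStarAlgAut_apply]; rfl

/-- positive part -/
noncomputable def posP {X : Matrix n n ℂ} (hX : X.IsHermitian) : Matrix n n ℂ :=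
  conjDiag hX (fun i => max (hX.eigenvalues i) 0)

noncomputable def negP {X : Matrix n n ℂ} (hX : X.IsHermitian) : Matrix n n ℂ :=
  conjDiag hX (fun i => max (-hX.eigenvalues i) 0)

lemma posP_posSemidef {X : Matrix n n ℂ} (hX : X.IsHermitian) : (posP hX).PosSemidef :=
  conjDiag_posSemidef hX fun i => le_max_right _ _

lemma negP_posSemidef {X : Matrix n n ℂ} (hX : X.IsHermitian) : (negP hX).PosSemidef :=
  conjDiag_posSemidef hX fun i => le_max_right _ _

lemma posP_sub_negP {X : Matrix n n ℂ} (hX : X.IsHermitian) : posP hX - negP hX = X := by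
  rw [posP, negP, conjDiag_sub]
  have : ((fun i => max (hX.eigenvalues i) 0) - fun i => max (-hX.eigenvalues i) 0)
      = hX.eigenvalues := by
    ext i
    simp only [Pi.sub_apply]
    rcases le_total (hX.eigenvalues i) 0 with h | h
    · rw [max_eq_right h, max_eq_left (by linarith)]; ring
    · rw [max_eq_left h, max_eq_right (by linarith)]; ring
  rw [this, conjDiag_eigen]

lemma posP_trace_re {X : Matrix n n ℂ} (hX : X.IsHermitian) :
    (posP hX).trace.re = posPartTrace X := by
  rw [posP, conjDiag_trace, posPartTrace, dif_pos hX]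
  push_cast
  simp


/-- spectral projection onto the strictly positive eigenspace -/
noncomputable def indP {X : Matrix n n ℂ} (hX : X.IsHermitian) : Matrix n n ℂ :=
  conjDiag hX (fun i => if 0 < hX.eigenvalues i then 1 else 0)

lemma indP_posSemidef {X : Matrix n n ℂ} (hX : X.IsHermitian) : (indP hX).PosSemidef :=
  conjDiag_posSemidef hX fun i => by positivity

lemma conjDiag_one {X : Matrix n n ℂ} (hX : X.IsHermitian) :
    conjDiag hX (fun _ => (1 : ℝ)) = 1 := by
  have h1 : (hX.eigenvectorUnitary : Matrix n n ℂ) *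
      (star hX.eigenvectorUnitary : Matrix n n ℂ) = 1 := by
    exact_mod_cast Unitary.coe_mul_star_self hX.eigenvectorUnitary
  simp only [conjDiag]
  have : (diagonal fun i => ((1 : ℝ) : ℂ) : Matrix n n ℂ) = 1 := by
    simp [Matrix.diagonal_one]
  rw [this, mul_one, h1]

lemma one_sub_indP_posSemidef {X : Matrix n n ℂ} (hX : X.IsHermitian) :
    ((1 : Matrix n n ℂ) - indP hX).PosSemidef := by
  have := conjDiag_sub hX (fun _ => (1:ℝ)) (fun i => if 0 < hX.eigenvalues i then 1 else 0)
  rw [conjDiag_one] at this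
  rw [indP, this]
  exact conjDiag_posSemidef hX fun i => by simp only [Pi.sub_apply]; split <;> norm_num

lemma indP_mul_self_trace {X : Matrix n n ℂ} (hX : X.IsHermitian) :
    ((indP hX * X).trace).re = posPartTrace X := by
  have e : indP hX * X = indP hX * conjDiag hX hX.eigenvalues :=
    congrArg (fun M => indP hX * M) (conjDiag_eigen hX).symm
  rw [e, indP, conjDiag_mul, conjDiag_trace, posPartTrace, dif_pos hX]
  have : ∀ i, ((fun i => if 0 < hX.eigenvalues i then (1:ℝ) else 0) * hX.eigenvalues) i
      = max (hX.eigenvalues i) 0 := by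
    intro i
    simp only [Pi.mul_apply]
    rcases lt_or_ge 0 (hX.eigenvalues i) with h | h
    · rw [if_pos h, one_mul, max_eq_left h.le]
    · rw [if_neg (not_lt.2 h), zero_mul, max_eq_right h]
  simp only [this]
  rw [Complex.re_sum]
  simp

lemma indP_trace_re {X : Matrix n n ℂ} (hX : X.IsHermitian) :
    (indP hX).trace.re = ∑ i, (if 0 < hX.eigenvalues i then (1:ℝ) else 0) := by
  rw [indP, conjDiag_trace, Complex.re_sum]
  simp

/-- trace against a sub-projection is at most the trace -/
lemma trace_mul_le_trace {P A : Matrix n n ℂ} (hP : P.PosSemidef)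
    (h1P : ((1 : Matrix n n ℂ) - P).PosSemidef) (hA : A.PosSemidef) :
    ((P * A).trace).re ≤ A.trace.re := by
  have h0 : (((1 - P) * A).trace).re = A.trace.re - ((P * A).trace).re := by
    rw [Matrix.sub_mul, one_mul, Matrix.trace_sub]
    simp
  have h5 := trace_mul_re_nonneg h1P hA
  rw [h0] at h5
  linarith

/-- key upper bound: `Tr[(A - B)₊] ≤ Tr A` for psd `A`, `B`. -/
lemma posPartTrace_sub_le {A B : Matrix n n ℂ} (hA : A.PosSemidef) (hB : B.PosSemidef) :
    posPartTrace (A - B) ≤ A.trace.re := by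
  have hX : (A - B).IsHermitian := hA.1.sub hB.1
  have h1 : posPartTrace (A - B) = ((indP hX * (A - B)).trace).re := (indP_mul_self_trace hX).symm
  have h2 : indP hX * (A - B) = indP hX * A - indP hX * B := by rw [Matrix.mul_sub]
  rw [h1, h2, Matrix.trace_sub]
  have h3 := trace_mul_re_nonneg (indP_posSemidef hX) hB
  have h4 := trace_mul_le_trace (indP_posSemidef hX) (one_sub_indP_posSemidef hX) hA
  simp only [Complex.sub_re]
  linarith

lemma posPartTrace_nonneg (X : Matrix n n ℂ) : 0 ≤ posPartTrace X := by
  rw [posPartTrace]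
  split
  · exact Finset.sum_nonneg fun i _ => le_max_right _ _
  · exact le_refl 0


lemma exists_decomp {X : Matrix n n ℂ} (hX : X.IsHermitian) :
    ∃ P N : Matrix n n ℂ, P.PosSemidef ∧ N.PosSemidef ∧ X = P - N ∧
      P.trace.re = posPartTrace X :=
  ⟨posP hX, negP hX, posP_posSemidef hX, negP_posSemidef hX, (posP_sub_negP hX).symm,
    posP_trace_re hX⟩

lemma posPartTrace_zero : posPartTrace (0 : Matrix n n ℂ) = 0 := by
  have h1 : posPartTrace (0 : Matrix n n ℂ) ≤ (0 : Matrix n n ℂ).trace.re := by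
    have := posPartTrace_sub_le (A := (0 : Matrix n n ℂ)) (B := 0)
      Matrix.PosSemidef.zero Matrix.PosSemidef.zero
    simpa using this
  have h2 := posPartTrace_nonneg (0 : Matrix n n ℂ)
  simp only [Matrix.trace_zero, Complex.zero_re] at h1
  linarith

lemma posPartTrace_add_le {X Y : Matrix n n ℂ} (hX : X.IsHermitian) (hY : Y.IsHermitian) :
    posPartTrace (X + Y) ≤ posPartTrace X + posPartTrace Y := by
  obtain ⟨P1, N1, hP1, hN1, hd1, ht1⟩ := exists_decomp hX
  obtain ⟨P2, N2, hP2, hN2, hd2, ht2⟩ := exists_decomp hY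
  have h : X + Y = (P1 + P2) - (N1 + N2) := by rw [hd1, hd2]; abel
  have := posPartTrace_sub_le (hP1.add hP2) (hN1.add hN2)
  rw [← h] at this
  calc posPartTrace (X + Y) ≤ (P1 + P2).trace.re := this
    _ = posPartTrace X + posPartTrace Y := by
        rw [Matrix.trace_add, Complex.add_re, ht1, ht2]

lemma posPartTrace_smul_le {X : Matrix n n ℂ} (hX : X.IsHermitian) {c : ℝ} (hc : 0 ≤ c) :
    posPartTrace ((c : ℂ) • X) ≤ c * posPartTrace X := by
  obtain ⟨P, N, hP, hN, hd, ht⟩ := exists_decomp hX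
  have h : (c : ℂ) • X = ((c : ℂ) • P) - ((c : ℂ) • N) := by rw [hd, smul_sub]
  have := posPartTrace_sub_le (smul_posSemidef hc hP) (smul_posSemidef hc hN)
  rw [← h] at this
  calc posPartTrace ((c:ℂ) • X) ≤ ((c : ℂ) • P).trace.re := this
    _ = c * posPartTrace X := by
        rw [Matrix.trace_smul, ← ht]
        simp [Complex.ofReal_mul]

/-- positive trace-preserving maps contract the positive-part trace. -/
lemma posPartTrace_map_le (Φ : Matrix n n ℂ →ₗ[ℂ] Matrix n n ℂ)
    (hpos : ∀ M : Matrix n n ℂ, M.PosSemidef → (Φ M).PosSemidef)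
    (htr : ∀ M : Matrix n n ℂ, (Φ M).trace = M.trace)
    {X : Matrix n n ℂ} (hX : X.IsHermitian) :
    posPartTrace (Φ X) ≤ posPartTrace X := by
  obtain ⟨P, N, hP, hN, hd, ht⟩ := exists_decomp hX
  have h : Φ X = Φ P - Φ N := by rw [hd, map_sub]
  have := posPartTrace_sub_le (hpos P hP) (hpos N hN)
  rw [← h] at this
  calc posPartTrace (Φ X) ≤ (Φ P).trace.re := this
    _ = posPartTrace X := by rw [htr, ht]

lemma isHermitian_map (Φ : Matrix n n ℂ →ₗ[ℂ] Matrix n n ℂ)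
    (hpos : ∀ M : Matrix n n ℂ, M.PosSemidef → (Φ M).PosSemidef)
    {X : Matrix n n ℂ} (hX : X.IsHermitian) : (Φ X).IsHermitian := by
  obtain ⟨P, N, hP, hN, hd, _⟩ := exists_decomp hX
  have h : Φ X = Φ P - Φ N := by rw [hd, map_sub]
  rw [h]
  exact ((hpos P hP).1).sub ((hpos N hN).1)

/-- trace against a psd `P` with `1 - P` psd is at most the positive-part trace. -/
lemma trace_mul_le_posPartTrace {P B : Matrix n n ℂ} (hP : P.PosSemidef)
    (h1P : ((1 : Matrix n n ℂ) - P).PosSemidef) (hB : B.IsHermitian) :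
    ((P * B).trace).re ≤ posPartTrace B := by
  obtain ⟨Bp, Bn, hBp, hBn, hd, ht⟩ := exists_decomp hB
  have h : P * B = P * Bp - P * Bn := by rw [hd, Matrix.mul_sub]
  rw [h, Matrix.trace_sub, Complex.sub_re]
  have h1 := trace_mul_re_nonneg hP hBn
  have h2 := trace_mul_le_trace hP h1P hBp
  rw [ht] at h2
  linarith

/-- The identity-shift bound: `Tr[(c•1 + B)₊] ≤ max 0 (c + Tr[B₊])` for `c ≤ 0`. -/
lemma posPartTrace_smul_one_add {c : ℝ} (hc : c ≤ 0) {B : Matrix n n ℂ}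
    (hB : B.IsHermitian) :
    posPartTrace ((c : ℂ) • (1 : Matrix n n ℂ) + B) ≤ max 0 (c + posPartTrace B) := by
  set X := (c : ℂ) • (1 : Matrix n n ℂ) + B with hXdef
  have hX : X.IsHermitian := by
    have h1 : ((c : ℂ) • (1 : Matrix n n ℂ)).IsHermitian := by
      have : ((c : ℂ) • (1 : Matrix n n ℂ))ᴴ = (c : ℂ) • (1 : Matrix n n ℂ) := by
        rw [Matrix.conjTranspose_smul, Matrix.conjTranspose_one, Complex.star_def,
          Complex.conj_ofReal]
      exact this
    exact h1.add hB
  by_cases hpos : ∀ i, hX.eigenvalues i ≤ 0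
  · have : posPartTrace X = 0 := by
      rw [posPartTrace, dif_pos hX]
      refine Finset.sum_eq_zero fun i _ => max_eq_right (hpos i)
    rw [this]
    exact le_max_left _ _
  · push_neg at hpos
    obtain ⟨i0, hi0⟩ := hpos
    have key : posPartTrace X = ((indP hX * X).trace).re := (indP_mul_self_trace hX).symm
    have hsplit : indP hX * X = (c : ℂ) • (indP hX) + indP hX * B := by
      calc indP hX * X = indP hX * ((c : ℂ) • 1 + B) :=
            congrArg (fun M => indP hX * M) hXdef
        _ = _ := by rw [Matrix.mul_add, Matrix.mul_smul, mul_one]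
    have htr : ((indP hX * X).trace).re = c * (indP hX).trace.re + ((indP hX * B).trace).re := by
      rw [hsplit, Matrix.trace_add, Matrix.trace_smul, Complex.add_re]
      simp
    have hm1 : (1 : ℝ) ≤ (indP hX).trace.re := by
      rw [indP_trace_re hX]
      have : (if 0 < hX.eigenvalues i0 then (1:ℝ) else 0) = 1 := if_pos hi0
      calc (1:ℝ) = (if 0 < hX.eigenvalues i0 then (1:ℝ) else 0) := this.symm
        _ ≤ ∑ i, (if 0 < hX.eigenvalues i then (1:ℝ) else 0) :=
            Finset.single_le_sum (f := fun i => if 0 < hX.eigenvalues i then (1:ℝ) else 0)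
              (fun i _ => by positivity) (Finset.mem_univ i0)
    have hcm : c * (indP hX).trace.re ≤ c := by
      nlinarith
    have hPB := trace_mul_le_posPartTrace (indP_posSemidef hX) (one_sub_indP_posSemidef hX) hB
    rw [key, htr]
    have : c * (indP hX).trace.re + ((indP hX * B).trace).re ≤ c + posPartTrace B := by
      linarith
    exact le_trans this (le_max_right _ _)

end HSAux

namespace HSAux2
open Matrix HSAux

variable {D k : ℕ}

/-- the conditional-sum part of the depolarizing channel -/
noncomputable def Tsite (D k : ℕ) (j : Fin k)
    (X : Matrix (Fin k → Fin D) (Fin k → Fin D) ℂ) :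
    Matrix (Fin k → Fin D) (Fin k → Fin D) ℂ :=
  Matrix.of fun a b => if a j = b j then
    ∑ s : Fin D, X (Function.update a j s) (Function.update b j s) else 0

lemma depolSite_apply (p : ℝ) (j : Fin k) (X : Matrix (Fin k → Fin D) (Fin k → Fin D) ℂ) :
    depolSite D k p j X = (1 - (p : ℂ)) • X + ((p : ℂ) / D) • Tsite D k j X := by
  ext a b
  by_cases h : a j = b j <;>
    simp [depolSite, Tsite, h, Matrix.add_apply, Matrix.smul_apply, smul_eq_mul]

lemma depolSite_decomp (p : ℝ) (j : Fin k) (X : Matrix (Fin k → Fin D) (Fin k → Fin D) ℂ) :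
    depolSite D k p j X = (1 - (p : ℂ)) • X + (p : ℂ) • (depolSite D k 1 j X) := by
  rw [depolSite_apply p, depolSite_apply 1, smul_add, smul_smul, smul_smul]
  push_cast
  rw [sub_self, mul_zero, zero_smul, zero_add, mul_one_div]

/-- Kraus operator `|s⟩⟨t|_j ⊗ I` -/
noncomputable def kraus (j : Fin k) (s t : Fin D) :
    Matrix (Fin k → Fin D) (Fin k → Fin D) ℂ :=
  Matrix.of fun a b => if a j = s ∧ b = Function.update a j t then 1 else 0

lemma star_ite01 (c : Prop) [Decidable c] :
    (starRingEnd ℂ) (if c then 1 else 0) = if c then 1 else 0 := by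
  split <;> simp

lemma Tsite_eq_kraus (j : Fin k) (X : Matrix (Fin k → Fin D) (Fin k → Fin D) ℂ) :
    Tsite D k j X = ∑ s : Fin D, ∑ t : Fin D, kraus j s t * X * (kraus j s t)ᴴ := by
  ext a b
  simp only [Matrix.sum_apply]
  have hterm : ∀ s t : Fin D, (kraus j s t * X * (kraus j s t)ᴴ) a b =
      if a j = s ∧ b j = s then X (Function.update a j t) (Function.update b j t) else 0 := by
    intro s t
    have h1 : ∀ d, (kraus j s t * X) a d =
        if a j = s then X (Function.update a j t) d else 0 := by
      intro d
      rw [Matrix.mul_apply]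
      simp only [kraus, Matrix.of_apply, ite_and, ite_mul, one_mul, zero_mul]
      by_cases h : a j = s
      · simp [h, Finset.sum_ite_eq', Fintype.sum_ite_eq']
      · simp [h]
    rw [Matrix.mul_apply]
    simp only [h1]
    simp only [Matrix.conjTranspose_apply, kraus, Matrix.of_apply, ite_and, star_ite01]
    by_cases ha : a j = s
    · by_cases hb : b j = s
      · simp [ha, hb, mul_ite, mul_one, mul_zero, Finset.sum_ite_eq', Fintype.sum_ite_eq']
      · simp [ha, hb]
    · simp [ha]
  simp only [hterm]
  have key : ∀ t : Fin D, (∑ s : Fin D, if a j = s ∧ b j = s then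
      X (Function.update a j t) (Function.update b j t) else 0) =
      if a j = b j then X (Function.update a j t) (Function.update b j t) else 0 := by
    intro t
    have hcond : ∀ s : Fin D, (if a j = s ∧ b j = s then
        X (Function.update a j t) (Function.update b j t) else 0) =
        (if s = a j ∧ a j = b j then
          X (Function.update a j t) (Function.update b j t) else 0) := by
      intro s
      refine if_congr ⟨fun h => ⟨h.1.symm, h.1.trans h.2.symm⟩,
        fun h => ⟨h.1.symm, h.2.symm.trans h.1.symm⟩⟩ rfl rfl
    by_cases h : a j = b j
    · simp [hcond, h, Fintype.sum_ite_eq']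
    · simp [hcond, h]
  rw [Finset.sum_comm]
  simp only [key]
  simp only [Tsite, Matrix.of_apply]
  by_cases h : a j = b j <;> simp [h]

lemma posSemidef_sum {ι : Type*} (s : Finset ι)
    (f : ι → Matrix (Fin k → Fin D) (Fin k → Fin D) ℂ)
    (h : ∀ i ∈ s, (f i).PosSemidef) : (∑ i ∈ s, f i).PosSemidef :=
  Finset.sum_induction f _ (fun _ _ ha hb => ha.add hb) Matrix.PosSemidef.zero h

lemma Tsite_posSemidef (j : Fin k) {X : Matrix (Fin k → Fin D) (Fin k → Fin D) ℂ}
    (hX : X.PosSemidef) : (Tsite D k j X).PosSemidef := by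
  rw [Tsite_eq_kraus]
  refine posSemidef_sum _ _ fun s _ => posSemidef_sum _ _ fun t _ => ?_
  exact hX.mul_mul_conjTranspose_same (kraus j s t)

lemma depolSite_posSemidef {p : ℝ} (hp0 : 0 ≤ p) (hp1 : p ≤ 1) (j : Fin k)
    {X : Matrix (Fin k → Fin D) (Fin k → Fin D) ℂ} (hX : X.PosSemidef) :
    (depolSite D k p j X).PosSemidef := by
  rw [depolSite_apply]
  have h1 : ((1 - (p:ℝ) : ℝ) : ℂ) = 1 - (p : ℂ) := by push_cast; ring
  have h2 : (((p / D : ℝ)) : ℂ) = (p : ℂ) / D := by push_cast; ring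
  rw [← h1, ← h2]
  exact (smul_posSemidef (by linarith) hX).add
    (smul_posSemidef (by positivity) (Tsite_posSemidef j hX))

/-- summing over updates overcounts by `D` -/
lemma sum_sum_update (f : (Fin k → Fin D) → ℂ) (j : Fin k) :
    ∑ s : Fin D, ∑ a : Fin k → Fin D, f (Function.update a j s) =
      (D : ℂ) * ∑ a : Fin k → Fin D, f a := by
  have hinv : Function.Involutive
      (fun x : Fin D × (Fin k → Fin D) => (x.2 j, Function.update x.2 j x.1)) := by
    intro x
    simp [Function.update_idem, Function.update_self, Function.update_eq_self]
  have key := hinv.bijective.sum_comp (fun x : Fin D × (Fin k → Fin D) => f x.2)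
  rw [Fintype.sum_prod_type, Fintype.sum_prod_type] at key
  simp only at key
  rw [key, Finset.sum_const, Finset.card_univ, Fintype.card_fin, nsmul_eq_mul]

lemma Tsite_trace (j : Fin k) (X : Matrix (Fin k → Fin D) (Fin k → Fin D) ℂ) :
    (Tsite D k j X).trace = (D : ℂ) * X.trace := by
  have h0 : (Tsite D k j X).trace =
      ∑ a : Fin k → Fin D, ∑ s : Fin D,
        X (Function.update a j s) (Function.update a j s) := by
    simp [Matrix.trace, Matrix.diag, Tsite]
  rw [h0, Finset.sum_comm, sum_sum_update (fun a => X a a) j]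
  rfl

lemma depolSite_trace (p : ℝ) (j : Fin k) (X : Matrix (Fin k → Fin D) (Fin k → Fin D) ℂ) :
    (depolSite D k p j X).trace = X.trace := by
  rcases Nat.eq_zero_or_pos D with hD | hD
  · have hE : IsEmpty (Fin k → Fin D) := by
      subst hD
      exact ⟨fun f => (f j).elim0⟩
    simp [Matrix.trace, Finset.univ_eq_empty]
  · rw [depolSite_apply, Matrix.trace_add, Matrix.trace_smul, Matrix.trace_smul, Tsite_trace]
    have hD' : (D : ℂ) ≠ 0 := by exact_mod_cast hD.ne'
    field_simp
    rw [smul_eq_mul, smul_eq_mul, div_mul_eq_mul_div, mul_div_assoc, mul_div_cancel_left₀ _ hD']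
    ring


/-- composition of single-site channels along a list of sites -/
noncomputable def Ccomp (D k : ℕ) (p : ℝ) (l : List (Fin k)) :
    Matrix (Fin k → Fin D) (Fin k → Fin D) ℂ →ₗ[ℂ]
      Matrix (Fin k → Fin D) (Fin k → Fin D) ℂ :=
  l.foldl (fun acc j => depolSite D k p j ∘ₗ acc) LinearMap.id

lemma Ccomp_nil (p : ℝ) : Ccomp D k p [] = LinearMap.id := rfl

lemma Ccomp_append (p : ℝ) (l : List (Fin k)) (j : Fin k) :
    Ccomp D k p (l ++ [j]) = depolSite D k p j ∘ₗ Ccomp D k p l := by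
  simp [Ccomp, List.foldl_append]

lemma Ccomp_posSemidef {p : ℝ} (hp0 : 0 ≤ p) (hp1 : p ≤ 1) (l : List (Fin k)) :
    ∀ X : Matrix (Fin k → Fin D) (Fin k → Fin D) ℂ, X.PosSemidef →
      (Ccomp D k p l X).PosSemidef := by
  induction l using List.reverseRecOn with
  | nil => intro X hX; simpa [Ccomp_nil] using hX
  | append_singleton l j ih =>
      intro X hX
      rw [Ccomp_append, LinearMap.comp_apply]
      exact depolSite_posSemidef hp0 hp1 j (ih X hX)

lemma Ccomp_trace (p : ℝ) (l : List (Fin k))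
    (X : Matrix (Fin k → Fin D) (Fin k → Fin D) ℂ) :
    (Ccomp D k p l X).trace = X.trace := by
  induction l using List.reverseRecOn with
  | nil => simp [Ccomp_nil]
  | append_singleton l j ih =>
      rw [Ccomp_append, LinearMap.comp_apply, depolSite_trace, ih]

lemma isHermitian_real_smul (c : ℝ) {X : Matrix (Fin k → Fin D) (Fin k → Fin D) ℂ}
    (hX : X.IsHermitian) : ((c : ℂ) • X).IsHermitian := by
  have : ((c : ℂ) • X)ᴴ = (c : ℂ) • X := by
    rw [Matrix.conjTranspose_smul, hX.eq, Complex.star_def, Complex.conj_ofReal]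
  exact this

lemma Ccomp_isHermitian {p : ℝ} (hp0 : 0 ≤ p) (hp1 : p ≤ 1) (l : List (Fin k))
    {X : Matrix (Fin k → Fin D) (Fin k → Fin D) ℂ} (hX : X.IsHermitian) :
    (Ccomp D k p l X).IsHermitian :=
  isHermitian_map _ (fun M hM => Ccomp_posSemidef hp0 hp1 l M hM) hX

lemma Ccomp_posPartTrace_le {p : ℝ} (hp0 : 0 ≤ p) (hp1 : p ≤ 1) (l : List (Fin k))
    {X : Matrix (Fin k → Fin D) (Fin k → Fin D) ℂ} (hX : X.IsHermitian) :
    posPartTrace (Ccomp D k p l X) ≤ posPartTrace X :=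
  posPartTrace_map_le _ (fun M hM => Ccomp_posSemidef hp0 hp1 l M hM)
    (fun M => Ccomp_trace p l M) hX

/-- override `a` by `f` on the sites in `l` -/
def patch (l : List (Fin k)) (a f : Fin k → Fin D) : Fin k → Fin D :=
  fun i => if i ∈ l then f i else a i

lemma patch_nil (a f : Fin k → Fin D) : patch [] a f = a := by
  funext i; simp [patch]

lemma patch_update {l : List (Fin k)} {j : Fin k} (hj : j ∉ l)
    (a f : Fin k → Fin D) (s : Fin D) :
    patch l (Function.update a j s) f = patch (l ++ [j]) a (Function.update f j s) := by
  funext i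
  by_cases hil : i ∈ l
  · have hij : i ≠ j := fun h => hj (h ▸ hil)
    simp [patch, hil, Function.update_of_ne hij]
  · by_cases hij : i = j
    · subst hij
      simp [patch, hil, Function.update_self]
    · simp [patch, hil, hij, Function.update_of_ne hij]

lemma Rop_apply (j : Fin k) (Y : Matrix (Fin k → Fin D) (Fin k → Fin D) ℂ)
    (a b : Fin k → Fin D) :
    depolSite D k 1 j Y a b = ((D : ℂ))⁻¹ *
      (if a j = b j then
        ∑ s : Fin D, Y (Function.update a j s) (Function.update b j s) else 0) := by
  simp [depolSite, one_div]

lemma Rcomp_formula (hD : D ≠ 0) (l : List (Fin k)) (hl : l.Nodup)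
    (X : Matrix (Fin k → Fin D) (Fin k → Fin D) ℂ) (a b : Fin k → Fin D) :
    Ccomp D k 1 l X a b = if (∀ j ∈ l, a j = b j) then
      ((D : ℂ) ^ k)⁻¹ * ∑ f : Fin k → Fin D, X (patch l a f) (patch l b f) else 0 := by
  induction l using List.reverseRecOn generalizing a b with
  | nil =>
      simp only [Ccomp_nil, LinearMap.id_apply, List.not_mem_nil, false_implies, implies_true,
        if_true, patch_nil]
      rw [Finset.sum_const, Finset.card_univ]
      have hcard : Fintype.card (Fin k → Fin D) = D ^ k := by
        simp [Fintype.card_fun]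
      rw [hcard, nsmul_eq_mul]
      have hDk : ((D : ℂ) ^ k) ≠ 0 := by
        have : (D : ℂ) ≠ 0 := by exact_mod_cast hD
        positivity
      push_cast
      field_simp
  | append_singleton l j ih =>
      have hl' : l.Nodup := (List.nodup_append.mp hl).1
      have hjl : j ∉ l := fun hmem =>
        (List.disjoint_of_nodup_append hl) hmem (List.mem_singleton_self j)
      rw [Ccomp_append, LinearMap.comp_apply, Rop_apply]
      by_cases hj : a j = b j
      · rw [if_pos hj]
        have hupd : ∀ s : Fin D,
            (Ccomp D k 1 l X) (Function.update a j s) (Function.update b j s) =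
            if (∀ i ∈ l, a i = b i) then
              ((D : ℂ) ^ k)⁻¹ * ∑ f : Fin k → Fin D,
                X (patch (l ++ [j]) a (Function.update f j s))
                  (patch (l ++ [j]) b (Function.update f j s)) else 0 := by
          intro s
          rw [ih hl']
          have hcond : (∀ i ∈ l, Function.update a j s i = Function.update b j s i) ↔
              (∀ i ∈ l, a i = b i) := by
            constructor <;> intro h i hi <;>
              have hij : i ≠ j := fun he => hjl (he ▸ hi)
            · have := h i hi
              rwa [Function.update_of_ne hij, Function.update_of_ne hij] at this
            · rw [Function.update_of_ne hij, Function.update_of_ne hij]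
              exact h i hi
          rw [if_congr hcond rfl rfl]
          by_cases hc : ∀ i ∈ l, a i = b i
          · rw [if_pos hc, if_pos hc]
            congr 1
            refine Finset.sum_congr rfl fun f _ => ?_
            rw [patch_update hjl a f s, patch_update hjl b f s]
          · rw [if_neg hc, if_neg hc]
        simp only [hupd]
        by_cases hc : ∀ i ∈ l, a i = b i
        · simp only [if_pos hc]
          have hcond2 : ∀ i ∈ l ++ [j], a i = b i := by
            intro i hi
            rcases List.mem_append.mp hi with h | h
            · exact hc i h
            · rw [List.mem_singleton.mp h]; exact hj
          rw [if_pos hcond2]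
          rw [← Finset.mul_sum]
          rw [sum_sum_update
            (fun f => X (patch (l ++ [j]) a f) (patch (l ++ [j]) b f)) j]
          have hD' : (D : ℂ) ≠ 0 := by exact_mod_cast hD
          field_simp
        · simp only [if_neg hc]
          have hcond2 : ¬ (∀ i ∈ l ++ [j], a i = b i) := by
            intro h
            exact hc fun i hi => h i (List.mem_append.mpr (Or.inl hi))
          rw [if_neg hcond2]
          simp
      · rw [if_neg hj]
        have hcond2 : ¬ (∀ i ∈ l ++ [j], a i = b i) := by
          intro h
          exact hj (h j (List.mem_append.mpr (Or.inr (List.mem_singleton_self j))))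
        rw [if_neg hcond2, mul_zero]

lemma Rcomp_finRange (hD : D ≠ 0)
    (X : Matrix (Fin k → Fin D) (Fin k → Fin D) ℂ) :
    Ccomp D k 1 (List.finRange k) X = (X.trace / (D : ℂ) ^ k) • (1 : Matrix _ _ ℂ) := by
  ext a b
  rw [Rcomp_formula hD _ (List.nodup_finRange k)]
  have hpatch : ∀ f : Fin k → Fin D, patch (List.finRange k) a f = f := by
    intro f; funext i; simp [patch, List.mem_finRange]
  have hpatchb : ∀ f : Fin k → Fin D, patch (List.finRange k) b f = f := by
    intro f; funext i; simp [patch, List.mem_finRange]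
  simp only [hpatch, hpatchb]
  have hcond : (∀ j ∈ List.finRange k, a j = b j) ↔ a = b := by
    constructor
    · intro h; funext i; exact h i (List.mem_finRange i)
    · intro h i _; rw [h]
  rw [if_congr hcond rfl rfl]
  have htrace : ∑ f : Fin k → Fin D, X f f = X.trace := rfl
  rw [htrace]
  by_cases hab : a = b
  · subst hab
    rw [if_pos rfl]
    simp [Matrix.one_apply_eq, div_eq_mul_inv, mul_comm]
  · rw [if_neg hab]
    simp [Matrix.one_apply_ne hab]


/-- the main inductive decomposition: the composed channel splits into the full
replacer part plus a remainder with controlled positive-part trace. -/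
lemma main_inv {p : ℝ} (hp0 : 0 ≤ p) (hp1 : p ≤ 1) (l : List (Fin k))
    {X : Matrix (Fin k → Fin D) (Fin k → Fin D) ℂ} (hX : X.IsHermitian) :
    ∃ B : Matrix (Fin k → Fin D) (Fin k → Fin D) ℂ, B.IsHermitian ∧
      Ccomp D k p l X = ((p ^ l.length : ℝ) : ℂ) • Ccomp D k 1 l X + B ∧
      posPartTrace B ≤ (1 - p ^ l.length) * posPartTrace X := by
  induction l using List.reverseRecOn with
  | nil =>
      refine ⟨0, Matrix.isHermitian_zero, ?_, ?_⟩
      · simp [Ccomp_nil]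
      · simp [posPartTrace_zero]
  | append_singleton l j ih =>
      obtain ⟨B, hBh, hEq, hBle⟩ := ih
      have hq0 : (0:ℝ) ≤ p ^ l.length := pow_nonneg hp0 _
      have hq1 : p ^ l.length ≤ 1 := pow_le_one₀ hp0 hp1
      have hRh : (Ccomp D k 1 l X).IsHermitian :=
        Ccomp_isHermitian zero_le_one le_rfl l hX
      have hRop : ∀ M : Matrix (Fin k → Fin D) (Fin k → Fin D) ℂ,
          M.PosSemidef → (depolSite D k 1 j M).PosSemidef :=
        fun M hM => depolSite_posSemidef zero_le_one le_rfl j hM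
      have hRopB_h : (depolSite D k 1 j B).IsHermitian := isHermitian_map _ hRop hBh
      refine ⟨((p ^ l.length * (1 - p) : ℝ) : ℂ) • Ccomp D k 1 l X +
        ((1 - p : ℝ) : ℂ) • B + ((p : ℝ) : ℂ) • (depolSite D k 1 j B), ?_, ?_, ?_⟩
      · exact ((isHermitian_real_smul _ hRh).add (isHermitian_real_smul _ hBh)).add
          (isHermitian_real_smul _ hRopB_h)
      · rw [Ccomp_append, LinearMap.comp_apply, hEq, map_add, _root_.map_smul,
          depolSite_decomp p j (Ccomp D k 1 l X), depolSite_decomp p j B,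
          Ccomp_append, LinearMap.comp_apply]
        simp only [List.length_append, List.length_singleton]
        push_cast
        module
      · have hptR : posPartTrace (Ccomp D k 1 l X) ≤ posPartTrace X :=
          Ccomp_posPartTrace_le zero_le_one le_rfl l hX
        have hptRB : posPartTrace (depolSite D k 1 j B) ≤ posPartTrace B :=
          posPartTrace_map_le _ hRop (fun M => depolSite_trace 1 j M) hBh
        have h1 : posPartTrace (((p ^ l.length * (1 - p) : ℝ) : ℂ) • Ccomp D k 1 l X)
            ≤ (p ^ l.length * (1 - p)) * posPartTrace X := by
          refine le_trans (posPartTrace_smul_le hRh (by nlinarith)) ?_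
          have : (0:ℝ) ≤ p ^ l.length * (1 - p) := by nlinarith
          exact mul_le_mul_of_nonneg_left hptR this
        have h2 : posPartTrace (((1 - p : ℝ) : ℂ) • B)
            ≤ (1 - p) * ((1 - p ^ l.length) * posPartTrace X) := by
          refine le_trans (posPartTrace_smul_le hBh (by linarith)) ?_
          exact mul_le_mul_of_nonneg_left hBle (by linarith)
        have h3 : posPartTrace (((p : ℝ) : ℂ) • (depolSite D k 1 j B))
            ≤ p * ((1 - p ^ l.length) * posPartTrace X) := by
          refine le_trans (posPartTrace_smul_le hRopB_h hp0) ?_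
          refine mul_le_mul_of_nonneg_left (le_trans hptRB hBle) hp0
        have hadd1 := posPartTrace_add_le
          (X := ((p ^ l.length * (1 - p) : ℝ) : ℂ) • Ccomp D k 1 l X +
            ((1 - p : ℝ) : ℂ) • B)
          (Y := ((p : ℝ) : ℂ) • (depolSite D k 1 j B))
          ((isHermitian_real_smul _ hRh).add (isHermitian_real_smul _ hBh))
          (isHermitian_real_smul _ hRopB_h)
        have hadd2 := posPartTrace_add_le
          (X := ((p ^ l.length * (1 - p) : ℝ) : ℂ) • Ccomp D k 1 l X)
          (Y := ((1 - p : ℝ) : ℂ) • B)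
          (isHermitian_real_smul _ hRh) (isHermitian_real_smul _ hBh)
        simp only [List.length_append, List.length_singleton]
        have hlen : p ^ (l.length + 1) = p ^ l.length * p := pow_succ p l.length
        calc posPartTrace _ ≤ _ := hadd1
          _ ≤ _ := add_le_add hadd2 le_rfl
          _ ≤ (p ^ l.length * (1 - p)) * posPartTrace X +
              (1 - p) * ((1 - p ^ l.length) * posPartTrace X) +
              p * ((1 - p ^ l.length) * posPartTrace X) :=
            add_le_add (add_le_add h1 h2) h3
          _ = (1 - p ^ (l.length + 1)) * posPartTrace X := by rw [hlen]; ring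

end HSAux2

section FinalAssembly
open Matrix HSAux HSAux2

variable {D k : ℕ}

lemma Rfin_eq (hgood : D ≠ 0 ∨ k = 0)
    (X : Matrix (Fin k → Fin D) (Fin k → Fin D) ℂ) :
    Ccomp D k 1 (List.finRange k) X = (X.trace / (D : ℂ) ^ k) • (1 : Matrix _ _ ℂ) := by
  rcases hgood with hD | hk
  · exact Rcomp_finRange hD X
  · subst hk
    rw [show (List.finRange 0) = ([] : List (Fin 0)) from rfl, Ccomp_nil]
    ext a b
    have hab : a = b := Subsingleton.elim a b
    subst hab
    have huniv : (Finset.univ : Finset (Fin 0 → Fin D)) = {a} := by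
      apply Finset.eq_singleton_iff_unique_mem.mpr
      exact ⟨Finset.mem_univ a, fun f _ => Subsingleton.elim f a⟩
    simp [Matrix.trace, Matrix.diag, huniv, Matrix.one_apply_eq, Matrix.smul_apply]
    rw [Subsingleton.elim (default : Fin 0 → Fin D) a]

lemma no_density_deg (hD : D = 0) (hk : 0 < k)
    (ρ : Matrix (Fin k → Fin D) (Fin k → Fin D) ℂ) (hρ : IsDensity ρ) : False := by
  have hE : IsEmpty (Fin k → Fin D) := ⟨fun f => by subst hD; exact (f ⟨0, hk⟩).elim0⟩
  have h0 : ρ.trace = 0 := by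
    rw [Matrix.trace, Finset.univ_eq_empty, Finset.sum_empty]
  exact one_ne_zero (hρ.2.symm.trans h0)

lemma key_bound {p γ : ℝ} (hgood : D ≠ 0 ∨ k = 0) (hp0 : 0 ≤ p) (hp1 : p ≤ 1)
    (hγ : 1 ≤ γ) (ρ σ : Matrix (Fin k → Fin D) (Fin k → Fin D) ℂ)
    (hρ : IsDensity ρ) (hσ : IsDensity σ) :
    hsDiv γ (depolPow D k p ρ) (depolPow D k p σ) ≤
      max 0 ((1 - γ) * p ^ k / (D : ℝ) ^ k + (1 - p ^ k) * hsDiv γ ρ σ) := by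
  set Δ := ρ - (γ : ℂ) • σ with hΔ
  have hσh : ((γ : ℂ) • σ).IsHermitian := isHermitian_real_smul γ hσ.1.1
  have hΔh : Δ.IsHermitian := hρ.1.1.sub hσh
  have hPow : depolPow D k p = Ccomp D k p (List.finRange k) := rfl
  have hlin : depolPow D k p ρ - (γ : ℂ) • depolPow D k p σ =
      Ccomp D k p (List.finRange k) Δ := by
    rw [hPow, hΔ, map_sub, _root_.map_smul]
  obtain ⟨B, hBh, hEq, hBle⟩ := main_inv hp0 hp1 (List.finRange k) hΔh
  rw [List.length_finRange] at hEq hBle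
  have hTr : Δ.trace = 1 - (γ : ℂ) := by
    rw [hΔ, Matrix.trace_sub, Matrix.trace_smul, hρ.2, hσ.2, smul_eq_mul, mul_one]
  have hRfin := Rfin_eq hgood Δ
  set c : ℝ := (1 - γ) * p ^ k / (D : ℝ) ^ k with hc
  have hscal : ((p ^ k : ℝ) : ℂ) • Ccomp D k 1 (List.finRange k) Δ =
      ((c : ℝ) : ℂ) • (1 : Matrix _ _ ℂ) := by
    rw [hRfin, hTr, smul_smul, hc]
    congr 1
    push_cast
    ring
  have hc0 : c ≤ 0 := by
    rw [hc]
    apply div_nonpos_iff.mpr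
    refine Or.inr ⟨?_, by positivity⟩
    have := pow_nonneg hp0 k
    nlinarith
  have hmain : hsDiv γ (depolPow D k p ρ) (depolPow D k p σ) =
      posPartTrace (((c : ℝ) : ℂ) • (1 : Matrix _ _ ℂ) + B) := by
    show posPartTrace _ = _
    rw [hlin, hEq, hscal]
  rw [hmain]
  refine le_trans (posPartTrace_smul_one_add hc0 hBh) ?_
  have hmono : c + posPartTrace B ≤ c + (1 - p ^ k) * posPartTrace Δ := by linarith
  have hhs : hsDiv γ ρ σ = posPartTrace Δ := rfl
  rw [hhs]
  exact max_le_max le_rfl hmono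

end FinalAssembly

/-- Hockey-stick divergence under local depolarizing noise `D_p^{⊗k}`, and the resulting
bound on its contraction coefficient. -/
theorem hsDiv_depolPow (D k : ℕ) (p γ : ℝ) (hp0 : 0 ≤ p) (hp1 : p ≤ 1) (hγ : 1 ≤ γ) :
    (∀ ρ σ : Matrix (Fin k → Fin D) (Fin k → Fin D) ℂ, IsDensity ρ → IsDensity σ →
      hsDiv γ (depolPow D k p ρ) (depolPow D k p σ) ≤
        max 0 ((1 - γ) * p ^ k / (D : ℝ) ^ k + (1 - p ^ k) * hsDiv γ ρ σ)) ∧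
    contractionCoeff γ (depolPow D k p) ≤
      max 0 ((1 - γ) * p ^ k / (D : ℝ) ^ k + (1 - p ^ k)) := by
  have hgoodOf : ¬(D = 0 ∧ 0 < k) → (D ≠ 0 ∨ k = 0) := by
    intro h
    by_cases hD : D = 0
    · right; by_contra hk; exact h ⟨hD, Nat.pos_of_ne_zero hk⟩
    · left; exact hD
  constructor
  · intro ρ σ hρ hσ
    by_cases hdeg : D = 0 ∧ 0 < k
    · exact (no_density_deg hdeg.1 hdeg.2 ρ hρ).elim
    · exact key_bound (hgoodOf hdeg) hp0 hp1 hγ ρ σ hρ hσ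
  · apply Real.sSup_le
    · rintro x ⟨ρ, σ, hρ, hσ, hpos, rfl⟩
      by_cases hdeg : D = 0 ∧ 0 < k
      · exact (no_density_deg hdeg.1 hdeg.2 ρ hρ).elim
      have hgood := hgoodOf hdeg
      have hkey := key_bound hgood hp0 hp1 hγ ρ σ hρ hσ
      set E := hsDiv γ ρ σ with hE
      have hE1 : E ≤ 1 := by
        have hps : ((γ : ℂ) • σ).PosSemidef :=
          HSAux.smul_posSemidef (le_trans zero_le_one hγ) hσ.1
        have h := HSAux.posPartTrace_sub_le hρ.1 hps
        rw [hρ.2] at h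
        exact le_of_le_of_eq h Complex.one_re
      set c : ℝ := (1 - γ) * p ^ k / (D : ℝ) ^ k with hc
      have hc0 : c ≤ 0 := by
        rw [hc]
        apply div_nonpos_iff.mpr
        refine Or.inr ⟨?_, by positivity⟩
        have := pow_nonneg hp0 k
        nlinarith
      have hdiv : hsDiv γ (depolPow D k p ρ) (depolPow D k p σ) / E ≤
          max 0 (c + (1 - p ^ k) * E) / E := by
        gcongr
      have hmax : max 0 (c + (1 - p ^ k) * E) / E = max 0 (c / E + (1 - p ^ k)) := by
        rw [← max_div_div_right (le_of_lt hpos), zero_div, add_div, mul_div_assoc,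
          div_self (ne_of_gt hpos), mul_one]
      have hcE : c / E ≤ c := by
        rw [div_le_iff₀ hpos]
        nlinarith [mul_nonneg (neg_nonneg.2 hc0) (sub_nonneg.2 hE1)]
      refine le_trans hdiv ?_
      rw [hmax]
      exact max_le_max le_rfl (by linarith)
    · exact le_max_left 0 _
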